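/- If κ is an uncountable cardinal with cf(κ) = ω, then there exists a compact T₁ topological space X such that o(X) = κ = |X|, κ is a caliber* for X, and κ is not a caliber for X. -/

import Mathlib

open Cardinal Set

universe u

/-- `κ` is a caliber for `X`: every κ-indexed family of non-empty open sets
(repetitions allowed) has a κ-sized subfamily with non-empty intersection. -/
def IsCaliber (X : Type u) [TopologicalSpace X] (κ : Cardinal.{u}) : Prop :=
  ∀ {ι : Type u} (U : ι → Set X), #ι = κ → (∀ i, IsOpen (U i)) → (∀ i, (U i).Nonempty) →
    ∃ J : Set ι, #J = κ ∧ (⋂ i ∈ J, U i).Nonempty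

/-- `κ` is a precaliber for `X`: every κ-indexed family of non-empty open sets
has a κ-sized subfamily which is centered. -/
def IsPrecaliber (X : Type u) [TopologicalSpace X] (κ : Cardinal.{u}) : Prop :=
  ∀ {ι : Type u} (U : ι → Set X), #ι = κ → (∀ i, IsOpen (U i)) → (∀ i, (U i).Nonempty) →
    ∃ J : Set ι, #J = κ ∧
      ∀ s : Finset ι, ↑s ⊆ J → s.Nonempty → (⋂ i ∈ s, U i).Nonempty

/-- `κ` is a weak precaliber for `X`: every κ-indexed family of non-empty open sets
has a κ-sized subfamily which is linked. -/
def IsWeakPrecaliber (X : Type u) [TopologicalSpace X] (κ : Cardinal.{u}) : Prop :=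
  ∀ {ι : Type u} (U : ι → Set X), #ι = κ → (∀ i, IsOpen (U i)) → (∀ i, (U i).Nonempty) →
    ∃ J : Set ι, #J = κ ∧ ∀ i ∈ J, ∀ j ∈ J, (U i ∩ U j).Nonempty

/-- `κ` is a caliber* for `X`: every family of non-empty open sets of cardinality `κ`
has a subfamily of cardinality `κ` with non-empty intersection. -/
def IsCaliberStar (X : Type u) [TopologicalSpace X] (κ : Cardinal.{u}) : Prop :=
  ∀ 𝒰 : Set (Set X), #𝒰 = κ → (∀ U ∈ 𝒰, IsOpen U) → (∀ U ∈ 𝒰, U.Nonempty) →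
    ∃ 𝒱 ⊆ 𝒰, #𝒱 = κ ∧ (⋂₀ 𝒱).Nonempty

/-- `κ` is a precaliber* for `X`: every family of non-empty open sets of cardinality `κ`
has a centered subfamily of cardinality `κ`. -/
def IsPrecaliberStar (X : Type u) [TopologicalSpace X] (κ : Cardinal.{u}) : Prop :=
  ∀ 𝒰 : Set (Set X), #𝒰 = κ → (∀ U ∈ 𝒰, IsOpen U) → (∀ U ∈ 𝒰, U.Nonempty) →
    ∃ 𝒱 ⊆ 𝒰, #𝒱 = κ ∧
      ∀ s : Finset (Set X), ↑s ⊆ 𝒱 → s.Nonempty → (⋂₀ (↑s : Set (Set X))).Nonempty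

/-- `κ` is a weak precaliber* for `X`: every family of non-empty open sets of
cardinality `κ` has a linked subfamily of cardinality `κ`. -/
def IsWeakPrecaliberStar (X : Type u) [TopologicalSpace X] (κ : Cardinal.{u}) : Prop :=
  ∀ 𝒰 : Set (Set X), #𝒰 = κ → (∀ U ∈ 𝒰, IsOpen U) → (∀ U ∈ 𝒰, U.Nonempty) →
    ∃ 𝒱 ⊆ 𝒰, #𝒱 = κ ∧ ∀ U ∈ 𝒱, ∀ V ∈ 𝒱, (U ∩ V).Nonempty

/-- `o X` : the number of open subsets of `X`. -/
def oCard (X : Type u) [TopologicalSpace X] : Cardinal.{u} :=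
  #{U : Set X | IsOpen U}

/-- A cellular family: a pairwise disjoint collection of non-empty open sets. -/
def IsCellularFamily (X : Type u) [TopologicalSpace X] (𝒰 : Set (Set X)) : Prop :=
  (∀ U ∈ 𝒰, IsOpen U) ∧ (∀ U ∈ 𝒰, U.Nonempty) ∧ 𝒰.Pairwise Disjoint

namespace Stmt18Aux

/-- The underlying space: a big part `A` plus a countable part. -/
abbrev Sp (A : Type u) : Type u := A ⊕ ULift.{u} ℕ

/-- The topology: a set is open iff it is empty, or its `ℕ`-part is cofinite and its
`A`-part is empty or cofinite. -/
def sumTop (A : Type u) : TopologicalSpace (Sp A) where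
  IsOpen U := U = ∅ ∨ (((Sum.inr ⁻¹' U)ᶜ).Finite ∧
      (Sum.inl ⁻¹' U = ∅ ∨ ((Sum.inl ⁻¹' U)ᶜ).Finite))
  isOpen_univ := Or.inr ⟨by simp, Or.inr (by simp)⟩
  isOpen_inter := by
    rintro U V (rfl | ⟨hUB, hUA⟩) hV
    · exact Or.inl (by simp)
    rcases hV with rfl | ⟨hVB, hVA⟩
    · exact Or.inl (by simp)
    refine Or.inr ⟨?_, ?_⟩
    · rw [Set.preimage_inter, Set.compl_inter]
      exact hUB.union hVB
    · rcases hUA with h | h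
      · exact Or.inl (by rw [Set.preimage_inter, h, Set.empty_inter])
      rcases hVA with h' | h'
      · exact Or.inl (by rw [Set.preimage_inter, h', Set.inter_empty])
      · exact Or.inr (by rw [Set.preimage_inter, Set.compl_inter]; exact h.union h')
  isOpen_sUnion := by
    intro s hs
    by_cases h0 : ⋃₀ s = ∅
    · exact Or.inl h0
    obtain ⟨x, U, hUs, hxU⟩ : ∃ x U, U ∈ s ∧ x ∈ U := by
      obtain ⟨x, hx⟩ := Set.nonempty_iff_ne_empty.2 h0
      obtain ⟨U, hU, hxU⟩ := hx
      exact ⟨x, U, hU, hxU⟩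
    have hU := (hs U hUs).resolve_left (Set.nonempty_iff_ne_empty.1 ⟨x, hxU⟩)
    refine Or.inr ⟨hU.1.subset
      (Set.compl_subset_compl.2 (Set.preimage_mono (Set.subset_sUnion_of_mem hUs))), ?_⟩
    by_cases hA : Sum.inl ⁻¹' ⋃₀ s = ∅
    · exact Or.inl hA
    obtain ⟨a, ha⟩ := Set.nonempty_iff_ne_empty.2 hA
    obtain ⟨V, hVs, haV⟩ := ha
    have hV := (hs V hVs).resolve_left (Set.nonempty_iff_ne_empty.1 ⟨_, haV⟩)
    have hVA := hV.2.resolve_left (Set.nonempty_iff_ne_empty.1 ⟨a, haV⟩)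
    exact Or.inr (hVA.subset
      (Set.compl_subset_compl.2 (Set.preimage_mono (Set.subset_sUnion_of_mem hVs))))

theorem isOpen_iff {A : Type u} (U : Set (Sp A)) :
    @IsOpen _ (sumTop A) U ↔ (U = ∅ ∨ (((Sum.inr ⁻¹' U)ᶜ).Finite ∧
      (Sum.inl ⁻¹' U = ∅ ∨ ((Sum.inl ⁻¹' U)ᶜ).Finite))) := Iff.rfl

theorem sum_set_ext {α β : Type*} {U V : Set (α ⊕ β)} (h1 : Sum.inl ⁻¹' U = Sum.inl ⁻¹' V)
    (h2 : Sum.inr ⁻¹' U = Sum.inr ⁻¹' V) : U = V := by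
  ext x
  cases x with
  | inl a => exact Set.ext_iff.1 h1 a
  | inr b => exact Set.ext_iff.1 h2 b

theorem isOpen_singleton_compl {A : Type u} (x : Sp A) :
    @IsOpen _ (sumTop A) ({x}ᶜ) := by
  rw [isOpen_iff]
  refine Or.inr ⟨?_, ?_⟩
  · cases x with
    | inl a =>
        have h1 : (Sum.inr ⁻¹' ({Sum.inl a}ᶜ : Set (Sp A)))ᶜ = (∅ : Set (ULift ℕ)) := by
          ext b; simp
        rw [h1]; exact Set.finite_empty
    | inr b =>
        have h1 : (Sum.inr ⁻¹' ({Sum.inr b}ᶜ : Set (Sp A)))ᶜ = {b} := by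
          ext c; simp
        rw [h1]; exact Set.finite_singleton b
  · cases x with
    | inl a =>
        refine Or.inr ?_
        have h2 : (Sum.inl ⁻¹' ({Sum.inl a}ᶜ : Set (Sp A)))ᶜ = {a} := by
          ext c; simp
        rw [h2]; exact Set.finite_singleton a
    | inr b =>
        refine Or.inr ?_
        have h2 : (Sum.inl ⁻¹' ({Sum.inr b}ᶜ : Set (Sp A)))ᶜ = (∅ : Set A) := by
          ext c; simp
        rw [h2]; exact Set.finite_empty

theorem t1 (A : Type u) : @T1Space (Sp A) (sumTop A) := by
  letI := sumTop A
  exact ⟨fun x => by rw [← isOpen_compl_iff]; exact isOpen_singleton_compl x⟩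

theorem compact (A : Type u) [Nonempty A] : @CompactSpace (Sp A) (sumTop A) := by
  classical
  letI := sumTop A
  constructor
  rw [isCompact_iff_finite_subcover]
  intro ι U hUo hcov
  obtain ⟨a₀⟩ := ‹Nonempty A›
  obtain ⟨i₀, hi₀⟩ := Set.mem_iUnion.mp (hcov (Set.mem_univ (Sum.inl a₀ : Sp A)))
  have hne : U i₀ ≠ ∅ := Set.nonempty_iff_ne_empty.1 ⟨_, hi₀⟩
  have h := ((isOpen_iff (U i₀)).mp (hUo i₀)).resolve_left hne
  have hAfin : ((Sum.inl ⁻¹' U i₀)ᶜ).Finite := by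
    refine h.2.resolve_left ?_
    intro he
    exact absurd (show a₀ ∈ Sum.inl ⁻¹' U i₀ from hi₀) (by rw [he]; exact Set.notMem_empty a₀)
  have hcfin : ((U i₀)ᶜ).Finite := by
    rw [← Set.finite_preimage_inl_and_inr]
    exact ⟨by rw [Set.preimage_compl]; exact hAfin, by rw [Set.preimage_compl]; exact h.1⟩
  haveI := hcfin.to_subtype
  choose f hf using fun x : ↥((U i₀)ᶜ) => Set.mem_iUnion.mp (hcov (Set.mem_univ (x : Sp A)))
  refine ⟨insert i₀ (Set.finite_range f).toFinset, fun x _ => ?_⟩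
  by_cases hxU : x ∈ U i₀
  · exact Set.mem_iUnion₂.mpr ⟨i₀, Finset.mem_insert_self _ _, hxU⟩
  · exact Set.mem_iUnion₂.mpr ⟨f ⟨x, hxU⟩,
      Finset.mem_insert_of_mem ((Set.finite_range f).mem_toFinset.mpr ⟨_, rfl⟩), hf ⟨x, hxU⟩⟩

end Stmt18Aux
namespace Stmt18Aux

theorem oCard_le (A : Type u) [Infinite A] :
    @oCard (Sp A) (sumTop A) ≤ #A := by
  classical
  letI := sumTop A
  have hcode : ∃ F : {U : Set (Sp A) | IsOpen U} →
      Option (Finset A) × Option (Finset (ULift.{u} ℕ)), Function.Injective F := by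
    refine ⟨fun U =>
      if hU : U.1 = ∅ then (none, none)
      else
        have h' := ((isOpen_iff U.1).mp U.2).resolve_left hU
        (if hA : Sum.inl ⁻¹' U.1 = ∅ then none
          else some (h'.2.resolve_left hA).toFinset,
         some h'.1.toFinset), ?_⟩
    intro U V hUV
    by_cases hU : U.1 = ∅ <;> by_cases hV : V.1 = ∅ <;>
      simp only [hU, hV, dif_pos, dif_neg, not_false_iff] at hUV
    · exact Subtype.ext (hU.trans hV.symm)
    · have := congrArg Prod.snd hUV; simp at this
    · have := congrArg Prod.snd hUV; simp at this
    · apply Subtype.ext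
      have h'U := ((isOpen_iff U.1).mp U.2).resolve_left hU
      have h'V := ((isOpen_iff V.1).mp V.2).resolve_left hV
      have hfst := congrArg Prod.fst hUV
      have hsnd := congrArg Prod.snd hUV
      simp only at hfst hsnd
      have hBeq : Sum.inr ⁻¹' U.1 = Sum.inr ⁻¹' V.1 := by
        have := Option.some.inj hsnd
        have h2 : (Sum.inr ⁻¹' U.1)ᶜ = (Sum.inr ⁻¹' V.1)ᶜ := by
          rw [← h'U.1.coe_toFinset, ← h'V.1.coe_toFinset, this]
        exact compl_injective h2
      have hAeq : Sum.inl ⁻¹' U.1 = Sum.inl ⁻¹' V.1 := by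
        by_cases hAU : Sum.inl ⁻¹' U.1 = ∅ <;> by_cases hAV : Sum.inl ⁻¹' V.1 = ∅ <;>
          simp only [hAU, hAV, dif_pos, dif_neg, not_false_iff] at hfst
        · rw [hAU, hAV]
        · exact absurd hfst (by simp)
        · exact absurd hfst (by simp)
        · have := Option.some.inj hfst
          have h2 : (Sum.inl ⁻¹' U.1)ᶜ = (Sum.inl ⁻¹' V.1)ᶜ := by
            rw [← (h'U.2.resolve_left hAU).coe_toFinset,
                ← (h'V.2.resolve_left hAV).coe_toFinset, this]
          exact compl_injective h2
      exact sum_set_ext hAeq hBeq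
  obtain ⟨F, hF⟩ := hcode
  refine le_trans (mk_le_of_injective hF) ?_
  have h1 : #(Option (Finset A) × Option (Finset (ULift.{u} ℕ))) =
      (#(Finset A) + 1) * (#(Finset (ULift.{u} ℕ)) + 1) := by
    simp [mk_option]
  rw [h1, mk_finset_of_infinite, mk_finset_of_infinite,
    mk_eq_aleph0 (ULift.{u} ℕ), add_one_eq (aleph0_le_mk A), add_one_eq le_rfl]
  exact le_of_eq (mul_eq_left (aleph0_le_mk A) (aleph0_le_mk A) aleph0_ne_zero)

theorem le_oCard (A : Type u) : #A ≤ @oCard (Sp A) (sumTop A) := by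
  letI := sumTop A
  refine mk_le_of_injective (f := fun a : A =>
    (⟨{Sum.inl a}ᶜ, isOpen_singleton_compl _⟩ : {U : Set (Sp A) | IsOpen U})) ?_
  intro a b hab
  have : ({Sum.inl a}ᶜ : Set (Sp A)) = {Sum.inl b}ᶜ := congrArg Subtype.val hab
  have h2 : ({Sum.inl a} : Set (Sp A)) = {Sum.inl b} := compl_injective this
  exact Sum.inl_injective (Set.singleton_eq_singleton_iff.mp h2)

theorem oCard_eq (A : Type u) [Infinite A] : @oCard (Sp A) (sumTop A) = #A :=
  le_antisymm (oCard_le A) (le_oCard A)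

end Stmt18Aux
namespace Stmt18Aux

theorem exists_seq (κ : Cardinal.{u}) (hκ : ℵ₀ < κ) (hcof : κ.ord.cof = ℵ₀) :
    ∃ e : ℕ → κ.ord.ToType, ∀ a, ∃ n, a ≤ e n := by
  obtain ⟨S, hSunb, hScard⟩ := Order.exists_cof_eq κ.ord.ToType
  rw [Ordinal.cof_toType, hcof] at hScard
  have : Nonempty (ULift.{u} ℕ ≃ ↥S) := by
    rw [← Cardinal.eq, hScard, mk_eq_aleph0 (ULift.{u} ℕ)]
  obtain ⟨eq⟩ := this
  refine ⟨fun n => ((eq ⟨n⟩ : ↥S) : κ.ord.ToType), fun a => ?_⟩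
  obtain ⟨b, hbS, hba⟩ := hSunb a
  refine ⟨(eq.symm ⟨b, hbS⟩).down, ?_⟩
  have h : eq (eq.symm ⟨b, hbS⟩) = ⟨b, hbS⟩ := eq.apply_symm_apply _
  show a ≤ ((eq ⟨(eq.symm ⟨b, hbS⟩).down⟩ : ↥S) : κ.ord.ToType)
  have h2 : (⟨(eq.symm ⟨b, hbS⟩).down⟩ : ULift.{u} ℕ) = eq.symm ⟨b, hbS⟩ := rfl
  rw [h2, h]
  exact hba

theorem mk_Iic_lt (κ : Cardinal.{u}) (hκ : ℵ₀ < κ) (x : κ.ord.ToType) :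
    #(Set.Iic x) < κ := by
  rw [← Set.Iio_insert]
  refine lt_of_le_of_lt mk_insert_le ?_
  exact add_lt_of_lt hκ.le (Cardinal.mk_Iio_ord_toType x) (lt_trans one_lt_aleph0 hκ)

theorem core (κ : Cardinal.{u}) (hκ : ℵ₀ < κ) (c : ℕ → Cardinal.{u}) (hc : ∀ n, c n < κ)
    (hcof2 : ∀ μ, μ < κ → ∃ n, μ ≤ c n) {A T : Type u} (hA : #A = κ) (hT : #T = κ)
    (P : T → A → Prop) (hfin : ∀ t, {a | ¬ P t a}.Finite) :
    ∃ a, ¬ (#{t // P t a} < κ) := by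
  by_contra h
  push_neg at h
  have hAn : ∀ a : A, ∃ n, a ∈ {a : A | #{t // P t a} ≤ c n} := fun a => hcof2 _ (h a)
  have hinf : ∃ n, {a : A | #{t // P t a} ≤ c n}.Infinite := by
    by_contra hfin2
    push_neg at hfin2
    have hsub : (Set.univ : Set A) ⊆ ⋃ n : ℕ, {a : A | #{t // P t a} ≤ c n} :=
      fun a _ => Set.mem_iUnion.mpr (hAn a)
    have hcnt : (Set.univ : Set A).Countable :=
      (Set.countable_iUnion fun n => (hfin2 n).countable).mono hsub
    have : #A ≤ ℵ₀ := by
      rw [← Cardinal.mk_univ]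
      exact hcnt.le_aleph0
    rw [hA] at this
    exact absurd this (not_le.mpr hκ)
  obtain ⟨n, hn⟩ := hinf
  set g : ℕ ↪ ↥{a : A | #{t // P t a} ≤ c n} := hn.natEmbedding _
  have hs : #(⋃ i : ULift.{u} ℕ, {t : T | P t (g i.down).1}) < κ := by
    refine lt_of_le_of_lt (mk_iUnion_le _) ?_
    refine mul_lt_of_lt hκ.le ((mk_eq_aleph0 (ULift.{u} ℕ)).trans_lt hκ) ?_
    refine lt_of_le_of_lt (ciSup_le fun i => ?_) (hc n)
    exact (g i.down).2
  have hne2 : ((⋃ i : ULift.{u} ℕ, {t : T | P t (g i.down).1})ᶜ).Nonempty := by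
    rw [Set.nonempty_iff_ne_empty]
    intro hN
    rw [Set.compl_empty_iff] at hN
    rw [hN, Cardinal.mk_univ, hT] at hs
    exact lt_irrefl κ hs
  obtain ⟨t, ht⟩ := hne2
  rw [Set.mem_compl_iff, Set.mem_iUnion] at ht
  push_neg at ht
  have hinf2 : {a : A | ¬ P t a}.Infinite := by
    apply Set.infinite_of_injective_forall_mem
      (f := fun i : ℕ => (g i).1)
    · exact Subtype.val_injective.comp g.injective
    · intro i
      exact ht ⟨i⟩
  exact hinf2 (hfin t)

end Stmt18Aux
theorem stmt18 (κ : Cardinal.{u}) (hκ : ℵ₀ < κ) (hcof : κ.ord.cof = ℵ₀) :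
    ∃ (X : Type u) (_ : TopologicalSpace X), CompactSpace X ∧ T1Space X ∧
      oCard X = κ ∧ #X = κ ∧ IsCaliberStar X κ ∧ ¬ IsCaliber X κ := by
  classical
  have hκ0 : κ ≠ 0 := (aleph0_pos.trans hκ).ne'
  set A := κ.ord.ToType with hAdef
  obtain ⟨e, he⟩ := Stmt18Aux.exists_seq κ hκ hcof
  haveI : Nonempty A := Ordinal.toType_nonempty_iff_ne_zero.mpr
    (by rw [Ne, Cardinal.ord_eq_zero]; exact hκ0)
  have hAcard : #A = κ := by rw [Cardinal.mk_toType, Cardinal.card_ord]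
  haveI : Infinite A := by rw [Cardinal.infinite_iff, hAcard]; exact hκ.le
  set c : ℕ → Cardinal.{u} := fun n => #(Set.Iic (e n)) with hcdef
  have hc : ∀ n, c n < κ := fun n => Stmt18Aux.mk_Iic_lt κ hκ (e n)
  have hcof2 : ∀ μ, μ < κ → ∃ n, μ ≤ c n := by
    by_contra hcon
    push_neg at hcon
    obtain ⟨μ, hμκ, hμ⟩ := hcon
    have huniv : (Set.univ : Set A) = ⋃ i : ULift.{u} ℕ, Set.Iic (e i.down) := by
      ext a
      simp only [Set.mem_univ, Set.mem_iUnion, Set.mem_Iic, true_iff]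
      obtain ⟨n, hn⟩ := he a
      exact ⟨⟨n⟩, hn⟩
    have hle : κ ≤ ℵ₀ * μ := by
      have h1 : κ = #(⋃ i : ULift.{u} ℕ, Set.Iic (e i.down)) := by
        rw [← huniv, Cardinal.mk_univ, hAcard]
      rw [h1]
      refine le_trans (Cardinal.mk_iUnion_le _) ?_
      exact mul_le_mul' (le_of_eq (Cardinal.mk_eq_aleph0 _))
        (ciSup_le fun i => (hμ i.down).le)
    exact absurd hle (not_le.mpr (Cardinal.mul_lt_of_lt hκ.le hκ hμκ))
  refine ⟨Stmt18Aux.Sp A, Stmt18Aux.sumTop A, Stmt18Aux.compact A, Stmt18Aux.t1 A,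
    ?_, ?_, ?_, ?_⟩
  · rw [show @oCard (Stmt18Aux.Sp A) (Stmt18Aux.sumTop A) = #A from Stmt18Aux.oCard_eq A,
      hAcard]
  · have h1 : #(Stmt18Aux.Sp A) = #A + #(ULift.{u} ℕ) := by
      simp [Cardinal.mk_sum]
    rw [h1, Cardinal.mk_eq_aleph0 (ULift.{u} ℕ), hAcard, Cardinal.add_eq_left hκ.le hκ.le]
  · -- IsCaliberStar
    intro 𝒰 hU hop hne
    set Bad := {U : Set (Stmt18Aux.Sp A) | U ∈ 𝒰 ∧ Sum.inl ⁻¹' U = ∅} with hBaddef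
    have hBadsub : Bad ⊆ 𝒰 := fun U hU' => hU'.1
    have hBfin : ∀ U : ↥Bad, ((Sum.inr ⁻¹' U.1)ᶜ).Finite := fun U =>
      (((Stmt18Aux.isOpen_iff U.1).mp (hop U.1 U.2.1)).resolve_left
        (hne U.1 U.2.1).ne_empty).1
    have hBadc : Bad.Countable := by
      rw [← Set.countable_coe_iff]
      have hinj : Function.Injective (fun U : ↥Bad => (hBfin U).toFinset) := by
        intro U V hUV
        change (hBfin U).toFinset = (hBfin V).toFinset at hUV
        apply Subtype.ext
        apply Stmt18Aux.sum_set_ext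
        · rw [U.2.2, V.2.2]
        · have h2 : (Sum.inr ⁻¹' U.1)ᶜ = (Sum.inr ⁻¹' V.1)ᶜ := by
            rw [← (hBfin U).coe_toFinset, ← (hBfin V).coe_toFinset, hUV]
          exact compl_injective h2
      exact hinj.countable
    have hgood : #(𝒰 \ Bad : Set (Set (Stmt18Aux.Sp A))) = κ := by
      by_contra hne'
      have hle' : #(𝒰 \ Bad : Set _) ≤ κ :=
        le_trans (Cardinal.mk_le_mk_of_subset Set.diff_subset) hU.le
      have hlt : #(𝒰 \ Bad : Set _) < κ := lt_of_le_of_ne hle' hne'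
      have hcntle : #(↥Bad) ≤ ℵ₀ := by
        haveI := hBadc.to_subtype
        exact Cardinal.mk_le_aleph0
      have heq := Cardinal.mk_diff_add_mk hBadsub
      rw [hU] at heq
      have hx2 : #(𝒰 \ Bad : Set _) + #(↥Bad) < κ :=
        Cardinal.add_lt_of_lt hκ.le hlt (lt_of_le_of_lt hcntle hκ)
      rw [heq] at hx2
      exact lt_irrefl κ hx2
    have hfin : ∀ t : ↥(𝒰 \ Bad), {x : A | ¬ (Sum.inl x ∈ (t : Set (Stmt18Aux.Sp A)))}.Finite := by
      intro t
      have hopen := ((Stmt18Aux.isOpen_iff t.1).mp (hop t.1 t.2.1)).resolve_left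
        (hne t.1 t.2.1).ne_empty
      have hA' : Sum.inl ⁻¹' t.1 ≠ ∅ := fun hA0 => t.2.2 ⟨t.2.1, hA0⟩
      exact hopen.2.resolve_left hA'
    obtain ⟨a, ha⟩ := Stmt18Aux.core κ hκ c hc hcof2 hAcard hgood
      (fun t x => Sum.inl x ∈ (t : Set (Stmt18Aux.Sp A))) hfin
    set 𝒱 := {U : Set (Stmt18Aux.Sp A) | U ∈ 𝒰 \ Bad ∧ Sum.inl a ∈ U} with h𝒱def
    have h𝒱card : #𝒱 = κ := by
      have hequiv : #{t : ↥(𝒰 \ Bad) // Sum.inl a ∈ (t : Set (Stmt18Aux.Sp A))} = #𝒱 :=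
        Cardinal.mk_congr (Equiv.subtypeSubtypeEquivSubtypeInter
          (fun U : Set (Stmt18Aux.Sp A) => U ∈ 𝒰 \ Bad) (fun U => Sum.inl a ∈ U))
      have hle' : #𝒱 ≤ κ :=
        le_trans (Cardinal.mk_le_mk_of_subset (fun U hU' => hU'.1.1)) hU.le
      exact le_antisymm hle' (hequiv ▸ (not_lt.mp ha))
    exact ⟨𝒱, fun U hU' => hU'.1.1, h𝒱card, ⟨Sum.inl a, fun U hU' => hU'.2⟩⟩
  · -- ¬ IsCaliber
    intro hcal
    set f : A → ℕ := fun i => Nat.find (he i) with hfdef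
    set U : A → Set (Stmt18Aux.Sp A) :=
      fun i => Sum.inr '' {b : ULift.{u} ℕ | f i ≤ b.down} with hUdef
    have hopen : ∀ i, @IsOpen _ (Stmt18Aux.sumTop A) (U i) := by
      intro i
      rw [Stmt18Aux.isOpen_iff]
      refine Or.inr ⟨?_, Or.inl ?_⟩
      · have h1 : (Sum.inr ⁻¹' U i)ᶜ ⊆ ULift.up '' (Set.Iio (f i)) := by
          intro b hb
          have hb' : ¬ f i ≤ b.down := by
            intro hle'
            exact hb (show b ∈ Sum.inr ⁻¹' U i from ⟨b, hle', rfl⟩)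
          exact ⟨b.down, not_le.mp hb', rfl⟩
        exact ((Set.finite_Iio (f i)).image ULift.up).subset h1
      · ext x; simp [hUdef]
    have hneU : ∀ i, (U i).Nonempty := by
      intro i
      refine ⟨Sum.inr ⟨f i⟩, ⟨⟨f i⟩, ?_, rfl⟩⟩
      exact le_refl (f i)
    obtain ⟨J, hJ, x, hx⟩ := hcal U hAcard hopen hneU
    have hJne : J.Nonempty := by
      rw [Set.nonempty_iff_ne_empty]
      rintro rfl
      rw [Cardinal.mk_emptyCollection] at hJ
      exact (aleph0_pos.trans hκ).ne' hJ.symm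
    obtain ⟨i₀, hi₀⟩ := hJne
    obtain ⟨b, hb, hxeq⟩ := Set.mem_iInter₂.mp hx i₀ hi₀
    have hbound : ∀ i ∈ J, f i ≤ b.down := by
      intro i hi
      obtain ⟨b', hb', heq⟩ := Set.mem_iInter₂.mp hx i hi
      have hbb : b' = b := Sum.inr_injective (heq.trans hxeq.symm)
      exact hbb ▸ hb'
    have hrange : (Finset.range (b.down + 1)).Nonempty :=
      ⟨0, Finset.mem_range.mpr (Nat.succ_pos _)⟩
    have hsub : J ⊆ Set.Iic ((Finset.range (b.down + 1)).sup' hrange e) := by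
      intro i hi
      have h1 : i ≤ e (f i) := Nat.find_spec (he i)
      have h2 : f i ∈ Finset.range (b.down + 1) :=
        Finset.mem_range.mpr (Nat.lt_succ_of_le (hbound i hi))
      exact le_trans h1 (Finset.le_sup' e h2)
    have hlt := lt_of_le_of_lt (Cardinal.mk_le_mk_of_subset hsub)
      (Stmt18Aux.mk_Iic_lt κ hκ _)
    rw [hJ] at hlt
    exact lt_irrefl κ hlt
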